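/- (Periodicity criterion.) Let k ≥ 1 and let λ_1, …, λ_k ∈ ℂ be nonzero and pairwise distinct. Let f : ℕ → ℂ be the sequence with generating function ∏_{i=1}^{k} 1/(1 − λ_i y), i.e. (∏_{i=1}^{k}(1 − λ_i y)) · (∑_{n≥0} f_n y^n) = 1 in ℂ⟦y⟧. Then f is periodic (there exists d ≥ 1 with f(n+d) = f(n) for all n ≥ 0) if and only if every λ_i is a root of unity (for each i there exists m ≥ 1 with λ_i^m = 1). -/

import Mathlib

open Polynomial

lemma coprime_one_sub_C_mul_X {a b : ℂ} (ha : a ≠ 0) (hb : b ≠ 0) (hab : a ≠ b) :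
    IsCoprime (1 - C a * X) (1 - C b * X) := by
  have hba : b - a ≠ 0 := sub_ne_zero.mpr (Ne.symm hab)
  have hab' : a - b ≠ 0 := sub_ne_zero.mpr hab
  refine ⟨C (b / (b - a)), C (a / (a - b)), ?_⟩
  have e1 : b / (b - a) + a / (a - b) = 1 := by field_simp; ring
  have e2 : b / (b - a) * a + a / (a - b) * b = 0 := by field_simp; ring
  have : C (b / (b - a)) * (1 - C a * X) + C (a / (a - b)) * (1 - C b * X)
      = C (b / (b - a) + a / (a - b)) - C (b / (b - a) * a + a / (a - b) * b) * X := by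
    simp only [map_add, map_mul]; ring
  rw [this, e1, e2]; simp

/-- Periodicity criterion: a linear recursive sequence whose core polynomial
has nonzero, pairwise distinct roots `λ₁, …, λ_k` is periodic if and only if
every `λᵢ` is a root of unity. -/
theorem periodic_iff_roots_of_unity (k : ℕ) (hk : 1 ≤ k)
    (lam : Fin k → ℂ) (hne : ∀ i, lam i ≠ 0)
    (hdist : ∀ i j, i ≠ j → lam i ≠ lam j) (f : ℕ → ℂ)
    (hf : (∏ i, (1 - PowerSeries.C (lam i) * PowerSeries.X)) *
      PowerSeries.mk f = 1) :
    (∃ d : ℕ, 1 ≤ d ∧ ∀ n : ℕ, f (n + d) = f n) ↔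
      ∀ i, ∃ m : ℕ, 1 ≤ m ∧ lam i ^ m = 1 := by
  classical
  set P : ℂ[X] := ∏ i, (1 - C (lam i) * X) with hP
  have hPcoe : (P : PowerSeries ℂ) = ∏ i, (1 - PowerSeries.C (lam i) * PowerSeries.X) := by
    rw [hP, ← Polynomial.coeToPowerSeries.ringHom_apply, map_prod]
    refine Finset.prod_congr rfl fun i _ => by
      simp [Polynomial.coeToPowerSeries.ringHom_apply]
  have hfacne : ∀ i : Fin k, (1 - C (lam i) * X : ℂ[X]) ≠ 0 := by
    intro i h
    have := congrArg (fun p : ℂ[X] => p.coeff 0) h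
    simp at this
  have hPne : P ≠ 0 := Finset.prod_ne_zero_iff.mpr fun i _ => hfacne i
  have hdegfac : ∀ i : Fin k, (1 - C (lam i) * X : ℂ[X]).natDegree = 1 := by
    intro i
    have h1 : (1 - C (lam i) * X : ℂ[X]) = C (-(lam i)) * X + C 1 := by
      simp [map_neg]; ring
    rw [h1, natDegree_linear (neg_ne_zero.mpr (hne i))]
  have hdegP : P.natDegree = k := by
    rw [hP, natDegree_prod _ _ fun i _ => hfacne i]
    simp [hdegfac]
  constructor
  · rintro ⟨d, hd1, hper⟩ i
    refine ⟨d, hd1, ?_⟩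
    -- the series (1 - X^d) * mk f is a polynomial
    set S : PowerSeries ℂ := (1 - PowerSeries.X ^ d) * PowerSeries.mk f with hS
    have hScoeff : ∀ n : ℕ, PowerSeries.coeff n S =
        f n - (if d ≤ n then f (n - d) else 0) := by
      intro n
      rw [hS, sub_mul, one_mul, map_sub, PowerSeries.coeff_X_pow_mul']
      simp
    have hSvanish : ∀ n : ℕ, d ≤ n → PowerSeries.coeff n S = 0 := by
      intro n hn
      rw [hScoeff, if_pos hn]
      obtain ⟨m, rfl⟩ := Nat.exists_eq_add_of_le hn
      rw [Nat.add_sub_cancel_left, add_comm, hper m, sub_self]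
    set R : ℂ[X] := PowerSeries.trunc d S with hR
    have hRS : (R : PowerSeries ℂ) = S := by
      ext n
      rw [Polynomial.coeff_coe, hR, PowerSeries.coeff_trunc]
      split
      · rfl
      · exact (hSvanish n (le_of_not_gt ‹¬ n < d›)).symm
    have hcast : ((1 - X ^ d : ℂ[X]) : PowerSeries ℂ) = 1 - PowerSeries.X ^ d := by
      rw [Polynomial.coe_sub, Polynomial.coe_one, Polynomial.coe_pow, Polynomial.coe_X]
    have key : (P * R : ℂ[X]) = 1 - X ^ d := by
      apply Polynomial.coe_inj.mp
      show ((P * R : ℂ[X]) : PowerSeries ℂ) = ((1 - X ^ d : ℂ[X]) : PowerSeries ℂ)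
      rw [Polynomial.coe_mul, hcast, hRS, hPcoe, hS]
      calc (∏ i, (1 - PowerSeries.C (lam i) * PowerSeries.X)) *
            ((1 - PowerSeries.X ^ d) * PowerSeries.mk f)
          = (1 - PowerSeries.X ^ d) *
            ((∏ i, (1 - PowerSeries.C (lam i) * PowerSeries.X)) * PowerSeries.mk f) := by
            ring
        _ = 1 - PowerSeries.X ^ d := by rw [hf, mul_one]
    have hev := congrArg (Polynomial.eval (lam i)⁻¹) key
    rw [eval_mul, eval_sub, eval_one, eval_pow, eval_X] at hev
    have hevP : P.eval (lam i)⁻¹ = 0 := by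
      rw [hP, eval_prod]
      refine Finset.prod_eq_zero (Finset.mem_univ i) ?_
      simp [mul_inv_cancel₀ (hne i)]
    rw [hevP, zero_mul] at hev
    have hinv : ((lam i)⁻¹) ^ d = 1 := by linear_combination hev
    have : ((lam i) ^ d)⁻¹ = 1 := by rw [← inv_pow]; exact hinv
    calc lam i ^ d = (((lam i) ^ d)⁻¹)⁻¹ := by rw [inv_inv]
      _ = 1 := by rw [this, inv_one]
  · intro h
    choose m hm1 hm using h
    set d : ℕ := ∏ i, m i with hd
    have hd1 : 1 ≤ d := Nat.one_le_iff_ne_zero.mpr <| by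
      rw [hd, Finset.prod_ne_zero_iff]
      exact fun i _ => Nat.one_le_iff_ne_zero.mp (hm1 i)
    have hld : ∀ i, lam i ^ d = 1 := by
      intro i
      obtain ⟨c, hc⟩ := Finset.dvd_prod_of_mem m (Finset.mem_univ i)
      rw [hd, hc, pow_mul, hm i, one_pow]
    -- each factor divides 1 - X^d
    have hdvd : ∀ i : Fin k, (1 - C (lam i) * X : ℂ[X]) ∣ (1 - X ^ d) := by
      intro i
      have h1 : (C (lam i) * X - 1 : ℂ[X]) ∣ ((C (lam i) * X) ^ d - 1 ^ d) :=
        sub_dvd_pow_sub_pow _ _ d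
      have h2 : ((C (lam i) * X) ^ d - 1 ^ d : ℂ[X]) = -(1 - X ^ d) := by
        rw [mul_pow, ← map_pow, hld i, map_one, one_mul, one_pow]; ring
      rw [h2, dvd_neg] at h1
      have h3 : (1 - C (lam i) * X : ℂ[X]) = -(C (lam i) * X - 1) := by ring
      rw [h3]
      exact (neg_dvd).mpr h1
    have hPdvd : P ∣ (1 - X ^ d : ℂ[X]) := by
      rw [hP]
      refine Finset.prod_dvd_of_coprime ?_ fun i _ => hdvd i
      intro i _ j _ hij
      exact coprime_one_sub_C_mul_X (hne i) (hne j) (hdist i j hij)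
    obtain ⟨Q, hQ⟩ := hPdvd
    have hXdne : (1 - X ^ d : ℂ[X]) ≠ 0 := by
      intro h0
      have := congrArg (fun p : ℂ[X] => p.coeff 0) h0
      have hd0 : (0 : ℕ) ≠ d := by omega
      simp [Polynomial.coeff_X_pow, hd0] at this
    have hQne : Q ≠ 0 := by
      intro h0
      rw [h0, mul_zero] at hQ
      exact hXdne hQ
    have hdeg1Xd : (1 - X ^ d : ℂ[X]).natDegree = d := by
      have : (1 - X ^ d : ℂ[X]) = -(X ^ d - C 1) := by rw [map_one]; ring
      rw [this, natDegree_neg, natDegree_X_pow_sub_C]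
    have hdegQ : Q.natDegree < d := by
      have := hdeg1Xd
      rw [hQ, natDegree_mul hPne hQne, hdegP] at this
      omega
    refine ⟨d, hd1, fun n => ?_⟩
    have hcast : ((1 - X ^ d : ℂ[X]) : PowerSeries ℂ) = 1 - PowerSeries.X ^ d := by
      rw [Polynomial.coe_sub, Polynomial.coe_one, Polynomial.coe_pow, Polynomial.coe_X]
    have hQcoe : ((1 : PowerSeries ℂ) - PowerSeries.X ^ d) = (P : PowerSeries ℂ) * (Q : PowerSeries ℂ) := by
      rw [← Polynomial.coe_mul, ← hQ, hcast]
    have key : ((1 : PowerSeries ℂ) - PowerSeries.X ^ d) * PowerSeries.mk f = (Q : PowerSeries ℂ) := by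
      rw [hQcoe, hPcoe]
      calc (∏ i, (1 - PowerSeries.C (lam i) * PowerSeries.X)) * (Q : PowerSeries ℂ) *
            PowerSeries.mk f
          = (Q : PowerSeries ℂ) *
            ((∏ i, (1 - PowerSeries.C (lam i) * PowerSeries.X)) * PowerSeries.mk f) := by ring
        _ = (Q : PowerSeries ℂ) := by rw [hf, mul_one]
    have hc := congrArg (PowerSeries.coeff (n + d)) key
    rw [sub_mul, one_mul, map_sub, PowerSeries.coeff_X_pow_mul,
      Polynomial.coeff_coe] at hc
    rw [Polynomial.coeff_eq_zero_of_natDegree_lt (lt_of_lt_of_le hdegQ (Nat.le_add_left d n))] at hc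
    simpa [sub_eq_zero] using hc
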